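/- For every perfect matching M of a graph G with maximum degree Δ, af(G,M) ≤ (Δ−1)·f(G,M). -/

import Mathlib

open SimpleGraph

variable {V : Type*}

/-- A closed walk is an `M`-alternating cycle: it is a cycle and its edges alternate
(cyclically) between `M` and the complement of `M`. -/
def SimpleGraph.IsAltCycle (G : SimpleGraph V) (M : Set (Sym2 V)) {v : V} (c : G.Walk v v) :
    Prop :=
  c.IsCycle ∧ List.Chain' (fun e f => (e ∈ M ↔ f ∉ M)) c.edges ∧
    ∀ e f, c.edges.head? = some e → c.edges.getLast? = some f → (f ∈ M ↔ e ∉ M)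

/-- `S` is a forcing set of the perfect matching `M`: `S ⊆ M` and `M` is the unique
perfect matching of `G` containing `S`. -/
def SimpleGraph.IsForcingSet (G : SimpleGraph V) (M : G.Subgraph) (S : Set (Sym2 V)) : Prop :=
  S ⊆ M.edgeSet ∧ ∀ N : G.Subgraph, N.IsPerfectMatching → S ⊆ N.edgeSet → N = M

/-- `S` is an anti-forcing set of the perfect matching `M`: `S` consists of edges of `G`
not in `M`, and `M` is the unique perfect matching of `G - S` (equivalently, the unique
perfect matching of `G` whose edge set avoids `S`). -/
def SimpleGraph.IsAntiForcingSet (G : SimpleGraph V) (M : G.Subgraph) (S : Set (Sym2 V)) :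
    Prop :=
  S ⊆ G.edgeSet \ M.edgeSet ∧
    ∀ N : G.Subgraph, N.IsPerfectMatching → Disjoint N.edgeSet S → N = M

/-- The forcing number `f(G,M)`. -/
noncomputable def SimpleGraph.forcingNum (G : SimpleGraph V) (M : G.Subgraph) : ℕ :=
  sInf {n | ∃ S : Set (Sym2 V), G.IsForcingSet M S ∧ S.ncard = n}

/-- The anti-forcing number `af(G,M)`. -/
noncomputable def SimpleGraph.antiForcingNum (G : SimpleGraph V) (M : G.Subgraph) : ℕ :=
  sInf {n | ∃ S : Set (Sym2 V), G.IsAntiForcingSet M S ∧ S.ncard = n}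

lemma pm_eq_of_edgeSet_subset {G : SimpleGraph V} {M N : G.Subgraph}
    (hM : M.IsPerfectMatching) (hN : N.IsPerfectMatching)
    (h : M.edgeSet ⊆ N.edgeSet) : N = M := by
  rw [Subgraph.isPerfectMatching_iff] at hM hN
  ext v w
  · simp [M.edge_vert (hM v).exists.choose_spec, N.edge_vert (hN v).exists.choose_spec]
  · constructor
    · intro hvw
      obtain ⟨w', hw', _⟩ := hM v
      have hNw' : N.Adj v w' := Subgraph.mem_edgeSet.1 (h (Subgraph.mem_edgeSet.2 hw'))
      obtain ⟨x, _, hux⟩ := hN v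
      rwa [(hux w hvw).trans (hux w' hNw').symm]
    · intro hvw
      exact Subgraph.mem_edgeSet.1 (h (Subgraph.mem_edgeSet.2 hvw))

/-- For every perfect matching `M` of a graph `G` with maximum degree `Δ`,
`af(G,M) ≤ (Δ−1)·f(G,M)`. -/
theorem antiforcing_le_maxDegree_mul_forcing (G : SimpleGraph V) [Fintype V]
    [DecidableRel G.Adj] (M : G.Subgraph) (hM : M.IsPerfectMatching) :
    G.antiForcingNum M ≤ (G.maxDegree - 1) * G.forcingNum M := by
  classical
  -- the set defining the forcing number is nonempty, so its infimum is attained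
  have hne : {n | ∃ S : Set (Sym2 V), G.IsForcingSet M S ∧ S.ncard = n}.Nonempty := by
    refine ⟨M.edgeSet.ncard, M.edgeSet, ⟨subset_rfl, fun N hN hsub => ?_⟩, rfl⟩
    exact pm_eq_of_edgeSet_subset hM hN hsub
  obtain ⟨S, hS, hScard⟩ := Nat.sInf_mem hne
  have hSfin : S.Finite := Set.toFinite S
  set F : Finset (Sym2 V) := hSfin.toFinset with hF
  -- the endpoint function and the "stars minus the forced edge"
  set u : Sym2 V → V := fun e => e.out.1 with hu
  have hue : ∀ e : Sym2 V, u e ∈ e := fun e => Sym2.out_fst_mem e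
  set A : Sym2 V → Finset (Sym2 V) := fun e => G.incidenceFinset (u e) \ {e} with hA
  set S' : Set (Sym2 V) := ↑(F.biUnion A) with hS'
  -- facts about edges in S
  have heM : ∀ e ∈ F, e ∈ M.edgeSet := fun e he => hS.1 (hSfin.mem_toFinset.1 he)
  have heG : ∀ e ∈ F, e ∈ G.edgeSet := fun e he => M.edgeSet_subset (heM e he)
  -- S' is an anti-forcing set
  have hAF : G.IsAntiForcingSet M S' := by
    constructor
    · intro f hf
      simp only [hS', hA, Finset.coe_biUnion, Set.mem_iUnion, Finset.mem_coe,
        Finset.mem_sdiff, Finset.mem_singleton, mem_incidenceFinset,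
        mk'_mem_incidenceSet_iff] at hf
      obtain ⟨e, heF, hfi, hfe⟩ := hf
      have hfG : f ∈ G.edgeSet := G.incidenceSet_subset _ hfi
      refine ⟨hfG, fun hfM => hfe ?_⟩
      -- both f and e are M-edges at vertex u e, so they coincide
      obtain ⟨w, hw, huw⟩ := hM.1 (hM.2 (u e))
      have h1 : f = s(u e, (Sym2.Mem.other hfi.2)) := (Sym2.other_spec hfi.2).symm
      have h2 : e = s(u e, (Sym2.Mem.other (hue e))) := (Sym2.other_spec (hue e)).symm
      have hf' : M.Adj (u e) (Sym2.Mem.other hfi.2) := by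
        rw [← Subgraph.mem_edgeSet, ← h1]; exact hfM
      have he' : M.Adj (u e) (Sym2.Mem.other (hue e)) := by
        rw [← Subgraph.mem_edgeSet, ← h2]; exact heM e heF
      have hoo : Sym2.Mem.other hfi.2 = Sym2.Mem.other (hue e) :=
        (huw _ hf').trans (huw _ he').symm
      exact h1.trans ((congrArg (fun x => s(u e, x)) hoo).trans h2.symm)
    · intro N hN hdisj
      refine hS.2 N hN ?_
      intro e heS
      have heF : e ∈ F := hSfin.mem_toFinset.2 heS
      obtain ⟨w, hw, _⟩ := hN.1 (hN.2 (u e))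
      have hfN : s(u e, w) ∈ N.edgeSet := Subgraph.mem_edgeSet.2 hw
      have hfe : s(u e, w) = e := by
        by_contra hne'
        have : s(u e, w) ∈ S' := by
          simp only [hS', hA, Finset.coe_biUnion, Set.mem_iUnion, Finset.mem_coe,
            Finset.mem_sdiff, Finset.mem_singleton, mem_incidenceFinset]
          exact ⟨e, heF, ⟨N.adj_sub hw, Sym2.mem_mk_left _ _⟩, hne'⟩
        exact (Set.disjoint_left.1 hdisj hfN this).elim
      rwa [hfe] at hfN
  -- the cardinality bound
  have hcard : S'.ncard ≤ (G.maxDegree - 1) * S.ncard := by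
    rw [hS', Set.ncard_coe_finset]
    calc (F.biUnion A).card ≤ ∑ e ∈ F, (A e).card := Finset.card_biUnion_le
      _ ≤ ∑ _e ∈ F, (G.maxDegree - 1) := by
          refine Finset.sum_le_sum fun e he => ?_
          have hsub : {e} ⊆ G.incidenceFinset (u e) :=
            Finset.singleton_subset_iff.2
              (by rw [mem_incidenceFinset]; exact ⟨heG e he, hue e⟩)
          simp only [hA]
          rw [Finset.card_sdiff_of_subset hsub, Finset.card_singleton,
            card_incidenceFinset_eq_degree]
          exact Nat.sub_le_sub_right (G.degree_le_maxDegree _) 1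
      _ = (G.maxDegree - 1) * S.ncard := by
          rw [Finset.sum_const, smul_eq_mul, Nat.mul_comm, hF,
            ← Set.ncard_eq_toFinset_card S hSfin]
  calc G.antiForcingNum M ≤ S'.ncard := Nat.sInf_le ⟨S', hAF, rfl⟩
    _ ≤ (G.maxDegree - 1) * S.ncard := hcard
    _ = (G.maxDegree - 1) * G.forcingNum M := by rw [hScard]; rfl
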